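/- arXiv:0811.1824 — 3 statements merged into one kernel-verified Lean document; each statement's English description precedes it below -/
import Mathlib

section
/- In an orthomodular lattice L, defining the Sasaki product p ∧̇ q := p ∧ (p⊥ ∨ q), the lattice L is a Boolean algebra if and only if p ∧̇ q = q ∧̇ p for all p, q ∈ L. -/
/-- An orthomodular lattice structure on a bounded lattice: an order-reversing
involutive orthocomplementation satisfying the orthomodular law. -/
class Orthomodular (L : Type*) [Lattice L] [BoundedOrder L] where
  compl : L → L
  compl_antitone : ∀ p q : L, p ≤ q → compl q ≤ compl p
  compl_compl : ∀ p : L, compl (compl p) = p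
  sup_compl : ∀ p : L, p ⊔ compl p = ⊤
  inf_compl : ∀ p : L, p ⊓ compl p = ⊥
  orthomodular : ∀ p q : L, p ≤ q → p ⊔ (compl p ⊓ q) = q

section Aux

variable {L : Type*} [Lattice L] [BoundedOrder L] [O : Orthomodular L]

lemma om_deMorgan_sup (x y : L) : O.compl (x ⊔ y) = O.compl x ⊓ O.compl y := by
  apply le_antisymm
  · exact le_inf (O.compl_antitone _ _ le_sup_left) (O.compl_antitone _ _ le_sup_right)
  · have hx : x ≤ O.compl (O.compl x ⊓ O.compl y) := by
      have := O.compl_antitone _ _ (inf_le_left : O.compl x ⊓ O.compl y ≤ O.compl x)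
      rwa [O.compl_compl] at this
    have hy : y ≤ O.compl (O.compl x ⊓ O.compl y) := by
      have := O.compl_antitone _ _ (inf_le_right : O.compl x ⊓ O.compl y ≤ O.compl y)
      rwa [O.compl_compl] at this
    have := O.compl_antitone _ _ (sup_le hx hy)
    rwa [O.compl_compl] at this

lemma om_deMorgan_inf (x y : L) : O.compl (x ⊓ y) = O.compl x ⊔ O.compl y := by
  have := om_deMorgan_sup (O.compl x) (O.compl y)
  rw [O.compl_compl, O.compl_compl] at this
  rw [← this, O.compl_compl]

end Aux

/-- In an orthomodular lattice, with the Sasaki product p ∧̇ q := p ⊓ (pᗮ ⊔ q),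
the lattice is a Boolean algebra (i.e. distributive) iff the Sasaki product is
commutative. -/
theorem sasaki_comm_iff_boolean {L : Type*} [Lattice L] [BoundedOrder L]
    [O : Orthomodular L] :
    (∀ p q r : L, p ⊓ (q ⊔ r) = (p ⊓ q) ⊔ (p ⊓ r)) ↔
      (∀ p q : L, p ⊓ (O.compl p ⊔ q) = q ⊓ (O.compl q ⊔ p)) := by
  constructor
  · intro hd p q
    rw [hd, hd, O.inf_compl, O.inf_compl, bot_sup_eq, bot_sup_eq, inf_comm]
  · intro hs p q r
    -- key: Sasaki projection lands below the second argument
    have key : ∀ a b : L, a ⊓ (O.compl a ⊔ b) ≤ b := by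
      intro a b
      rw [hs]; exact inf_le_left
    set d := (p ⊓ q) ⊔ (p ⊓ r) with hdd
    set e := p ⊓ (q ⊔ r) with hee
    have hde : d ≤ e :=
      sup_le (inf_le_inf_left _ le_sup_left) (inf_le_inf_left _ le_sup_right)
    have hbot : O.compl d ⊓ e = ⊥ := by
      set x := O.compl d ⊓ e with hx
      have hxp : x ≤ p := le_trans inf_le_right inf_le_left
      have hxq : x ≤ O.compl q := by
        have h1 : x ≤ O.compl p ⊔ O.compl q := by
          have : O.compl d ≤ O.compl (p ⊓ q) := O.compl_antitone _ _ le_sup_left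
          rw [om_deMorgan_inf] at this
          exact le_trans inf_le_left this
        exact le_trans (le_inf hxp h1) (key p (O.compl q))
      have hxr : x ≤ O.compl r := by
        have h1 : x ≤ O.compl p ⊔ O.compl r := by
          have : O.compl d ≤ O.compl (p ⊓ r) := O.compl_antitone _ _ le_sup_right
          rw [om_deMorgan_inf] at this
          exact le_trans inf_le_left this
        exact le_trans (le_inf hxp h1) (key p (O.compl r))
      have hqc : x ≤ O.compl (q ⊔ r) := by
        rw [om_deMorgan_sup]; exact le_inf hxq hxr
      have hqr : x ≤ q ⊔ r := le_trans inf_le_right inf_le_right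
      have : x ≤ (q ⊔ r) ⊓ O.compl (q ⊔ r) := le_inf hqr hqc
      rw [O.inf_compl] at this
      exact le_bot_iff.mp this
    have := O.orthomodular d e hde
    rw [hbot, sup_bot_eq] at this
    exact this.symm
end

section
/- A state α on a unital C*-algebra A is multiplicative (α(ab) = α(a)α(b) for all a, b) if and only if α(a²) = α(a)² for every self-adjoint a ∈ A. -/
open ComplexOrder

/-- A state on a unital C*-algebra: a positive linear functional sending 1 to 1. -/
def IsState' {A : Type*} [CStarAlgebra A] (φ : A →ₗ[ℂ] ℂ) : Prop :=
  φ 1 = 1 ∧ ∀ a : A, 0 ≤ φ (star a * a)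

section Aux

open Complex

variable {A : Type*} [CStarAlgebra A] (α : A →ₗ[ℂ] ℂ) (hα : IsState' α)

include hα

private lemma aux_im_zero (a : A) : (α (star a * a)).im = 0 :=
  ((Complex.le_def.mp (hα.2 a)).2).symm

private lemma aux_star_map (a : A) : α (star a) = (starRingEnd ℂ) (α a) := by
  have h1 := aux_im_zero α hα (1 + a)
  have h2 := aux_im_zero α hα (1 + Complex.I • a)
  have e1 : star (1 + a) * (1 + a) = 1 + a + star a + star a * a := by
    simp [star_add, add_mul, mul_add]
    abel
  have e2 : star (1 + Complex.I • a) * (1 + Complex.I • a)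
      = 1 + Complex.I • a + (-Complex.I) • star a + star a * a := by
    simp [star_add, star_smul, add_mul, mul_add, smul_mul_assoc, mul_smul_comm,
      smul_smul, Complex.conj_I]
    module
  rw [e1] at h1
  rw [e2] at h2
  have ha := aux_im_zero α hα a
  have h1' : (α a).im + (α (star a)).im = 0 := by
    simpa [map_add, hα.1, Complex.add_im, ha] using h1
  have h2' : (α a).re - (α (star a)).re = 0 := by
    simp only [map_add, map_smul, smul_eq_mul, Complex.add_im, Complex.mul_im,
      Complex.I_re, Complex.I_im, Complex.neg_re, Complex.neg_im, hα.1, ha] at h2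
    simp at h2
    linarith
  apply Complex.ext <;> simp [Complex.conj_re, Complex.conj_im] <;> linarith

private lemma aux_null_left (c : A) (hc : α (star c * c) = 0) (b : A) :
    α (b * c) = 0 := by
  by_contra hz
  set z := α (b * c) with hzdef
  have hnz : 0 < Complex.normSq z := Complex.normSq_pos.mpr hz
  set C := (α (b * star b)).re with hC
  have key : ∀ s : ℝ, 2 * s * Complex.normSq z ≤ C := by
    intro s
    set t : ℂ := (s : ℂ) * (starRingEnd ℂ) z with htdef
    have hx : star (star b - t • c) * (star b - t • c)
        = b * star b - t • (b * c) - (starRingEnd ℂ) t • (star c * star b)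
          + ((starRingEnd ℂ) t * t) • (star c * c) := by
      simp [star_sub, star_smul, star_star, sub_mul, mul_sub, smul_mul_assoc,
        mul_smul_comm, smul_smul]
      module
    have hpos := hα.2 (star b - t • c)
    rw [hx] at hpos
    have hst : α (star c * star b) = (starRingEnd ℂ) z := by
      have e : star c * star b = star (b * c) := by simp [star_mul]
      rw [e, aux_star_map α hα, ← hzdef]
    have hval : α (b * star b - t • (b * c) - (starRingEnd ℂ) t • (star c * star b)
          + ((starRingEnd ℂ) t * t) • (star c * c))
        = α (b * star b) - (((2 * s * Complex.normSq z : ℝ) : ℂ)) := by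
      simp only [map_add, map_sub, map_smul, smul_eq_mul, hc, hst, mul_zero,
        add_zero, ← hzdef]
      have h1 : t * z = ((s * Complex.normSq z : ℝ) : ℂ) := by
        rw [htdef, mul_assoc, mul_comm ((starRingEnd ℂ) z) z, Complex.mul_conj]
        push_cast
        ring
      have h2 : (starRingEnd ℂ) t * (starRingEnd ℂ) z
          = ((s * Complex.normSq z : ℝ) : ℂ) := by
        rw [htdef]
        simp only [map_mul, Complex.conj_conj, Complex.conj_ofReal]
        rw [mul_assoc, Complex.mul_conj]
        push_cast
        ring
      rw [h1, h2]
      push_cast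
      ring
    rw [hval] at hpos
    have hre := (Complex.le_def.mp hpos).1
    simp only [Complex.zero_re, Complex.sub_re, Complex.ofReal_re] at hre
    linarith
  have hkey := key ((C + 1) / (2 * Complex.normSq z))
  have heq : 2 * ((C + 1) / (2 * Complex.normSq z)) * Complex.normSq z = C + 1 := by
    field_simp
  rw [heq] at hkey
  linarith

end Aux

/-- A state on a unital C*-algebra is multiplicative iff `α (a²) = (α a)²` for
every self-adjoint `a`. -/
theorem state_multiplicative_iff {A : Type*} [CStarAlgebra A]
    (α : A →ₗ[ℂ] ℂ) (hα : IsState' α) :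
    (∀ a b : A, α (a * b) = α a * α b) ↔
      (∀ a : A, IsSelfAdjoint a → α (a * a) = α a ^ 2) := by
  constructor
  · intro h a _
    rw [h, sq]
  · intro h a b
    have real_of_sa : ∀ x : A, IsSelfAdjoint x → (starRingEnd ℂ) (α x) = α x := by
      intro x hx
      rw [← aux_star_map α hα, hx.star_eq]
    have key : ∀ x : A, IsSelfAdjoint x → ∀ d : A, α (d * x) = α d * α x := by
      intro x hx d
      set c := x - α x • 1 with hcdef
      have hsc : IsSelfAdjoint c := by
        simp only [IsSelfAdjoint, hcdef, star_sub, star_smul, hx.star_eq, star_one]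
        rw [show (star (α x) : ℂ) = (starRingEnd ℂ) (α x) from rfl, real_of_sa x hx]
      have hαc : α c = 0 := by
        simp [hcdef, map_sub, map_smul, hα.1]
      have hcc : α (star c * c) = 0 := by
        rw [hsc.star_eq, h c hsc, hαc]
        ring
      have hnull := aux_null_left α hα c hcc d
      rw [hcdef, mul_sub, mul_smul_comm, mul_one, map_sub, map_smul,
        smul_eq_mul, sub_eq_zero] at hnull
      rw [hnull]
      ring
    set x : A := (2⁻¹ : ℂ) • (b + star b) with hxdef
    set y : A := (-(2⁻¹) * Complex.I : ℂ) • (b - star b) with hydef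
    have hx : IsSelfAdjoint x := by
      rw [IsSelfAdjoint, hxdef, star_smul, star_add, star_star]
      simp
      module
    have hy : IsSelfAdjoint y := by
      rw [IsSelfAdjoint, hydef, star_smul, star_sub, star_star]
      simp [Complex.conj_I]
      module
    have hb : b = x + Complex.I • y := by
      rw [hxdef, hydef, smul_smul]
      have hI : Complex.I * (-(2⁻¹) * Complex.I) = (2⁻¹ : ℂ) := by
        rw [mul_comm, mul_assoc, Complex.I_mul_I]
        norm_num
      rw [hI]
      module
    rw [hb]
    simp only [mul_add, mul_smul_comm, map_add, map_smul, key x hx a, key y hy a,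
      smul_eq_mul]
    ring
end

section
/- Every compact operator on a complex Hilbert space of dimension greater than 1 has a nontrivial closed invariant subspace. -/
open Filter Topology
open scoped ENNReal NNReal

/-- If the spectral radius of `a` is zero, then `c ^ n * ‖a ^ n‖ → 0` for any `c ≥ 0`. -/
lemma aux_pow_norm_tendsto_zero {A : Type*} [NormedRing A] [NormedAlgebra ℂ A]
    [CompleteSpace A] {a : A} (h : spectralRadius ℂ a = 0) {c : ℝ} (hc : 0 ≤ c) :
    Tendsto (fun n : ℕ => c ^ n * ‖a ^ n‖) atTop (𝓝 0) := by
  have hg := spectrum.pow_nnnorm_pow_one_div_tendsto_nhds_spectralRadius a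
  rw [h] at hg
  set ε : ℝ≥0 := ⟨(2 * (c + 1))⁻¹, by positivity⟩ with hε
  have hεpos : (0:ℝ≥0∞) < ε := by
    simp only [ENNReal.coe_pos]
    exact (show (0:ℝ) < (2*(c+1))⁻¹ by positivity)
  have hev : ∀ᶠ n : ℕ in atTop, (‖a ^ n‖₊ : ℝ≥0∞) ^ (1 / n : ℝ) < ε :=
    hg.eventually_lt_const hεpos
  have hcε : c * (ε : ℝ) ≤ 1/2 := by
    have : (ε : ℝ) = (2 * (c + 1))⁻¹ := rfl
    rw [this]
    rw [div_eq_mul_inv, one_mul]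
    have h2 : (0:ℝ) < 2 * (c+1) := by positivity
    rw [mul_inv_le_iff₀ h2]
    nlinarith
  have key : ∀ᶠ n : ℕ in atTop, c ^ n * ‖a ^ n‖ ≤ (1/2) ^ n := by
    filter_upwards [hev, eventually_ge_atTop 1] with n hn hn1
    have hnorm : ‖a ^ n‖ ≤ (ε : ℝ) ^ n := by
      have hlt : (‖a ^ n‖₊ : ℝ≥0∞) ^ (1 / n : ℝ) ≤ (ε : ℝ≥0∞) := le_of_lt hn
      have hx : (‖a ^ n‖₊ : ℝ≥0∞) ≤ (ε : ℝ≥0∞) ^ (n : ℝ) := by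
        have := ENNReal.rpow_le_rpow hlt (by positivity : (0:ℝ) ≤ (n:ℝ))
        rwa [← ENNReal.rpow_mul, one_div, inv_mul_cancel₀ (Nat.cast_ne_zero.mpr (Nat.one_le_iff_ne_zero.mp hn1) : (n:ℝ) ≠ 0), ENNReal.rpow_one] at this
      have hx' : (‖a ^ n‖₊ : ℝ≥0∞) ≤ ((ε ^ n : ℝ≥0) : ℝ≥0∞) := by
        rwa [ENNReal.coe_pow, ← ENNReal.rpow_natCast (ε : ℝ≥0∞) n] 
      have := ENNReal.coe_le_coe.mp hx'
      exact_mod_cast this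
    calc c ^ n * ‖a ^ n‖ ≤ c ^ n * (ε:ℝ) ^ n := by
          exact mul_le_mul_of_nonneg_left hnorm (by positivity)
      _ = (c * ε) ^ n := (mul_pow _ _ _).symm
      _ ≤ (1/2) ^ n := pow_le_pow_left₀ (by positivity) hcε n
  have hgeo : Tendsto (fun n : ℕ => ((1:ℝ)/2) ^ n) atTop (𝓝 0) :=
    tendsto_pow_atTop_nhds_zero_of_lt_one (by norm_num) (by norm_num)
  have hnn : ∀ᶠ n : ℕ in atTop, (0:ℝ) ≤ c ^ n * ‖a ^ n‖ := by
    filter_upwards with n; positivity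
  exact tendsto_of_tendsto_of_tendsto_of_le_of_le' tendsto_const_nhds hgeo hnn key

/-- If `T` acts as a scalar, any line is a nontrivial invariant subspace. -/
lemma aux_line {H : Type*} [NormedAddCommGroup H] [InnerProductSpace ℂ H] [CompleteSpace H]
    (T : H →L[ℂ] H) (hdim : 1 < Module.rank ℂ H) (c : ℂ) (hc : ∀ x, T x = c • x) :
    ∃ M : Submodule ℂ H, IsClosed (M : Set H) ∧ M ≠ ⊥ ∧ M ≠ ⊤ ∧
      ∀ x ∈ M, T x ∈ M := by
  have : Nontrivial H := by
    rw [← rank_pos_iff_nontrivial (R := ℂ)]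
    exact lt_trans zero_lt_one hdim
  obtain ⟨x, hx⟩ := exists_ne (0 : H)
  refine ⟨Submodule.span ℂ {x}, ?_, ?_, ?_, ?_⟩
  · have : FiniteDimensional ℂ (Submodule.span ℂ {x}) := by
      apply FiniteDimensional.span_singleton  -- guess
    exact Submodule.closed_of_finiteDimensional _
  · simpa [Submodule.span_singleton_eq_bot] using hx
  · intro htop
    have h1 : Module.rank ℂ H ≤ 1 := by
      have hle := rank_span_le (R := ℂ) ({x} : Set H)
      rw [Cardinal.mk_singleton] at hle
      calc Module.rank ℂ H = Module.rank ℂ (⊤ : Submodule ℂ H) := (rank_top ℂ H).symm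
        _ = Module.rank ℂ (Submodule.span ℂ ({x} : Set H)) := by rw [htop]
        _ ≤ 1 := hle
    exact absurd (lt_of_lt_of_le hdim h1) (lt_irrefl _)
  · intro z hz
    rw [hc z]
    exact Submodule.smul_mem _ _ hz

/-- A compact operator with nonzero spectral radius has an eigenvector with nonzero
eigenvalue. -/
lemma aux_eigen {H : Type*} [NormedAddCommGroup H] [InnerProductSpace ℂ H] [CompleteSpace H]
    [Nontrivial H] (T : H →L[ℂ] H) (hT : IsCompactOperator T)
    (hr : spectralRadius ℂ T ≠ 0) :
    ∃ (c : ℂ) (v : H), c ≠ 0 ∧ v ≠ 0 ∧ T v = c • v := by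
  classical
  let A := H →L[ℂ] H
  haveI : Nontrivial A := by
    refine ⟨1, 0, fun h => ?_⟩
    obtain ⟨x, hx⟩ := exists_ne (0 : H)
    have := congrArg (fun f : A => f x) h
    simp only [ContinuousLinearMap.one_apply, ContinuousLinearMap.zero_apply] at this
    exact hx this
  -- the spectrum attains the spectral radius
  obtain ⟨lam, hmem, heq⟩ := spectrum.exists_nnnorm_eq_spectralRadius (T : A)
  have hlam0 : lam ≠ 0 := by
    rintro rfl
    simp at heq
    exact hr heq.symm
  have hlamnorm : (0:ℝ) < ‖lam‖ := norm_pos_iff.mpr hlam0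
  -- approximate eigenvectors
  have key : ∀ n : ℕ, ∃ y : H, ‖y‖ = 1 ∧
      ‖lam • y - T y‖ ≤ 3 * ‖lam‖ / ((n:ℝ) + 1) := by
    intro n
    set s : ℝ := 1 + ((n:ℝ) + 1)⁻¹ with hs
    have hs1 : (1:ℝ) < s := by
      rw [hs]
      have : (0:ℝ) < ((n:ℝ)+1)⁻¹ := by positivity
      linarith
    set mu : ℂ := (s : ℂ) * lam with hmu
    have hmunorm : ‖mu‖ = s * ‖lam‖ := by
      rw [hmu, norm_mul, Complex.norm_real, Real.norm_of_nonneg (by linarith)]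
    have hlt : spectralRadius ℂ (T : A) < ‖mu‖₊ := by
      rw [← heq]
      rw [ENNReal.coe_lt_coe, ← NNReal.coe_lt_coe, coe_nnnorm, coe_nnnorm, hmunorm]
      nlinarith
    have hres := spectrum.mem_resolventSet_of_spectralRadius_lt hlt
    rw [resolventSet, Set.mem_setOf_eq] at hres
    set U := hres.unit with hU
    have hUval : (U : A) = algebraMap ℂ A mu - T := rfl
    -- the resolvent norm is large
    have hdiff : ‖(algebraMap ℂ A lam - T) - (U : A)‖ = ‖lam‖ / ((n:ℝ)+1) := by
      rw [hUval]
      have : (algebraMap ℂ A lam - T) - (algebraMap ℂ A mu - T)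
          = algebraMap ℂ A (lam - mu) := by
        rw [map_sub]; abel
      rw [this, norm_algebraMap']
      have : lam - mu = -(((((n:ℝ)+1)⁻¹ : ℝ) : ℂ) * lam) := by
        rw [hmu, hs]; push_cast; ring
      rw [this, norm_neg, norm_mul, Complex.norm_real,
        Real.norm_of_nonneg (by positivity), div_eq_inv_mul]
    have hRnorm : ((n:ℝ)+1) / ‖lam‖ ≤ ‖(↑U⁻¹ : A)‖ := by
      by_contra hcon
      push_neg at hcon
      have hinv : ‖(algebraMap ℂ A lam - T) - (U : A)‖ < ‖(↑U⁻¹ : A)‖⁻¹ := by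
        rw [hdiff]
        have hU0 : (0:ℝ) < ‖(↑U⁻¹ : A)‖ := Units.norm_pos U⁻¹
        have h2 : ‖(↑U⁻¹ : A)‖⁻¹ > (((n:ℝ)+1) / ‖lam‖)⁻¹ := by
          exact inv_strictAnti₀ hU0 hcon
        rwa [inv_div] at h2
      have := (U.ofNearby _ hinv).isUnit
      rw [spectrum.mem_iff] at hmem
      exact hmem this
    have hRpos : (0:ℝ) < ‖(↑U⁻¹ : A)‖ := Units.norm_pos U⁻¹
    -- pick an almost-norming vector
    obtain ⟨u, hu1, hu2⟩ := ContinuousLinearMap.exists_lt_apply_of_lt_opNorm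
      (↑U⁻¹ : A) (r := ‖(↑U⁻¹ : A)‖ / 2) (by linarith)
    set z : H := (↑U⁻¹ : A) u with hz
    have hz0 : (0:ℝ) < ‖z‖ := lt_trans (by linarith) hu2
    set y : H := ((‖z‖⁻¹ : ℝ) : ℂ) • z with hy
    have hynorm : ‖y‖ = 1 := by
      rw [hy, norm_smul, Complex.norm_real, Real.norm_of_nonneg (by positivity),
        inv_mul_cancel₀ (ne_of_gt hz0)]
    refine ⟨y, hynorm, ?_⟩
    have happ : (algebraMap ℂ A mu - T) z = u := by
      have : ((U : A) * (↑U⁻¹ : A)) u = u := by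
        rw [U.mul_inv]; simp
      rwa [hUval] at this
    have hmuy : ‖mu • y - T y‖ ≤ 2 * ‖lam‖ / ((n:ℝ)+1) := by
      have : mu • y - T y = ((‖z‖⁻¹ : ℝ) : ℂ) • ((algebraMap ℂ A mu - T) z) := by
        rw [hy, ContinuousLinearMap.sub_apply, smul_sub, map_smul]
        congr 1
        rw [Algebra.algebraMap_eq_smul_one, ContinuousLinearMap.smul_apply,
          ContinuousLinearMap.one_apply, smul_comm]
      rw [this, happ, norm_smul, Complex.norm_real, Real.norm_of_nonneg (by positivity)]
      have hz2 : 2 / ‖(↑U⁻¹ : A)‖ ≤ 2 * ‖lam‖ / ((n:ℝ)+1) := by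
        rw [div_le_div_iff₀ hRpos (by positivity)]
        have h3 : ((n:ℝ)+1) ≤ ‖(↑U⁻¹ : A)‖ * ‖lam‖ := (div_le_iff₀ hlamnorm).mp hRnorm
        nlinarith
      calc ‖z‖⁻¹ * ‖u‖ ≤ ‖z‖⁻¹ * 1 := by
            apply mul_le_mul_of_nonneg_left (le_of_lt hu1) (by positivity)
        _ = ‖z‖⁻¹ := mul_one _
        _ ≤ 2 / ‖(↑U⁻¹ : A)‖ := by
            have h4 : (‖(↑U⁻¹ : A)‖/2)⁻¹ = 2/‖(↑U⁻¹ : A)‖ := by rw [inv_div]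
            rw [← h4]
            exact inv_anti₀ (by positivity) (le_of_lt hu2)
        _ ≤ 2 * ‖lam‖ / ((n:ℝ)+1) := hz2
    calc ‖lam • y - T y‖
        ≤ ‖mu • y - T y‖ + ‖(lam - mu) • y‖ := by
          have : lam • y - T y
              = (mu • y - T y) + (lam - mu) • y := by
            rw [sub_smul]; abel
          rw [this]; exact norm_add_le _ _
      _ ≤ 2 * ‖lam‖ / ((n:ℝ)+1) + ‖lam‖ / ((n:ℝ)+1) := by
          apply add_le_add hmuy
          rw [norm_smul]
          have h1 : ‖lam - mu‖ = ‖lam‖ / ((n:ℝ)+1) := by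
            have : lam - mu = -(((((n:ℝ)+1)⁻¹ : ℝ) : ℂ) * lam) := by
              rw [hmu, hs]; push_cast; ring
            rw [this, norm_neg, norm_mul, Complex.norm_real,
              Real.norm_of_nonneg (by positivity), div_eq_inv_mul]
          rw [h1, hynorm, mul_one]
      _ = 3 * ‖lam‖ / ((n:ℝ)+1) := by ring
  choose y hy1 hy2 using key
  have hb : ∀ n, y n ∈ Metric.closedBall (0:H) 1 := fun n => by
    simp [Metric.mem_closedBall, dist_zero_right, hy1 n]
  have hT' : IsCompactOperator ⇑(T.toLinearMap) := hT
  have hK : IsCompact (closure (⇑(T.toLinearMap) '' Metric.closedBall (0:H) 1)) :=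
    hT'.isCompact_closure_image_of_bounded Metric.isBounded_closedBall
  have hmemK : ∀ n, T (y n) ∈ closure (⇑(T.toLinearMap) '' Metric.closedBall (0:H) 1) :=
    fun n => subset_closure ⟨y n, hb n, rfl⟩
  obtain ⟨w, hwK, φ, hφ, hconv⟩ := hK.tendsto_subseq hmemK
  -- the defect tends to zero
  have hbound : Tendsto (fun n : ℕ => 3 * ‖lam‖ / ((n:ℝ) + 1)) atTop (𝓝 0) := by
    have h1 : Tendsto (fun n : ℕ => ((n:ℝ) + 1)) atTop atTop :=
      tendsto_atTop_add_const_right _ _ tendsto_natCast_atTop_atTop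
    have h2 : Tendsto (fun n : ℕ => ((n:ℝ) + 1)⁻¹) atTop (𝓝 0) := h1.inv_tendsto_atTop
    have := h2.const_mul (3 * ‖lam‖)
    simpa [div_eq_mul_inv, mul_zero] using this
  have hδ : Tendsto (fun n : ℕ => lam • y n - T (y n)) atTop (𝓝 0) :=
    squeeze_zero_norm hy2 hbound
  have hδφ : Tendsto (fun k : ℕ => lam • y (φ k) - T (y (φ k))) atTop (𝓝 0) :=
    hδ.comp hφ.tendsto_atTop
  have hyid : ∀ n, lam⁻¹ • (T (y n) + (lam • y n - T (y n))) = y n := fun n => by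
    rw [add_sub_cancel, smul_smul, inv_mul_cancel₀ hlam0, one_smul]
  have hyconv : Tendsto (fun k => y (φ k)) atTop (𝓝 (lam⁻¹ • w)) := by
    have h3 : Tendsto (fun k => lam⁻¹ • (T (y (φ k)) + (lam • y (φ k) - T (y (φ k)))))
        atTop (𝓝 (lam⁻¹ • (w + 0))) := (hconv.add hδφ).const_smul lam⁻¹
    rw [add_zero] at h3
    simpa only [hyid] using h3
  set v : H := lam⁻¹ • w with hv
  have hvnorm : ‖v‖ = 1 := by
    have h4 : Tendsto (fun k => ‖y (φ k)‖) atTop (𝓝 ‖v‖) := hyconv.norm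
    have h5 : (fun k => ‖y (φ k)‖) = fun _ => 1 := funext fun k => hy1 _
    rw [h5] at h4
    exact (tendsto_const_nhds_iff.mp h4).symm
  have hTv : T v = lam • v := by
    have h1 : Tendsto (fun k => T (y (φ k))) atTop (𝓝 (T v)) :=
      (T.continuous.tendsto v).comp hyconv
    have h2 : T v = w := tendsto_nhds_unique h1 hconv
    rw [h2, hv, smul_smul, mul_inv_cancel₀ hlam0, one_smul]
  exact ⟨lam, v, hlam0, fun h => by simp [h] at hvnorm, hTv⟩

/-- Hilden's argument: a nonzero quasinilpotent compact operator for which every nonzero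
vector is cyclic yields a contradiction. -/
lemma aux_hilden {H : Type*} [NormedAddCommGroup H] [InnerProductSpace ℂ H] [CompleteSpace H]
    [Nontrivial H] (T : H →L[ℂ] H) (hT : IsCompactOperator T)
    (hr : spectralRadius ℂ T = 0) (hT0 : T ≠ 0)
    (hcyc : ∀ y : H, y ≠ 0 → ∀ z : H,
      z ∈ closure (Submodule.span ℂ (Set.range fun n : ℕ => (T^n) y) : Set H)) : False := by
  classical
  obtain ⟨u, hu⟩ : ∃ u, T u ≠ 0 := by
    by_contra h
    push_neg at h
    exact hT0 (ContinuousLinearMap.ext fun x => by simp [h x])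
  have hu0 : u ≠ 0 := fun h => hu (by simp [h])
  have hun : (0:ℝ) < ‖u‖ := norm_pos_iff.mpr hu0
  have hTun : (0:ℝ) < ‖T u‖ := norm_pos_iff.mpr hu
  set a : ℝ := max (2/‖u‖) ((‖T‖+1)/‖T u‖) with ha
  have ha0 : 0 < a := lt_max_of_lt_left (by positivity)
  set x₀ : H := ((a:ℝ) : ℂ) • u with hx₀
  have hx₀norm : ‖x₀‖ = a * ‖u‖ := by
    rw [hx₀, norm_smul, Complex.norm_real, Real.norm_of_nonneg ha0.le]
  have hx₀2 : 2 ≤ ‖x₀‖ := by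
    rw [hx₀norm]
    have : 2/‖u‖ ≤ a := le_max_left _ _
    rw [div_le_iff₀ hun] at this
    linarith
  have hTx₀ : ‖T‖ + 1 ≤ ‖T x₀‖ := by
    have : T x₀ = ((a:ℝ) : ℂ) • T u := by rw [hx₀, map_smul]
    rw [this, norm_smul, Complex.norm_real, Real.norm_of_nonneg ha0.le]
    have h1 : (‖T‖+1)/‖T u‖ ≤ a := le_max_right _ _
    rw [div_le_iff₀ hTun] at h1
    linarith
  set B : Set H := Metric.closedBall x₀ 1 with hB
  have hBnorm : ∀ x ∈ B, 1 ≤ ‖x‖ := by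
    intro x hx
    rw [hB, Metric.mem_closedBall, dist_comm, dist_eq_norm] at hx
    have := norm_sub_norm_le x₀ x
    linarith [abs_le.mp (abs_norm_sub_norm_le x₀ x)]
  have hBTnorm : ∀ x ∈ B, 1 ≤ ‖T x‖ := by
    intro x hx
    rw [hB, Metric.mem_closedBall, dist_comm, dist_eq_norm] at hx
    have h1 : ‖T x₀ - T x‖ ≤ ‖T‖ := by
      calc ‖T x₀ - T x‖ = ‖T (x₀ - x)‖ := by rw [map_sub]
        _ ≤ ‖T‖ * ‖x₀ - x‖ := T.le_opNorm _
        _ ≤ ‖T‖ * 1 := by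
            exact mul_le_mul_of_nonneg_left hx (norm_nonneg _)
        _ = ‖T‖ := mul_one _
    have h2 := norm_sub_norm_le (T x₀) (T x)
    linarith
  -- the compact set K
  have hT' : IsCompactOperator ⇑(T.toLinearMap) := hT
  have hBbdd : Bornology.IsBounded B := Metric.isBounded_closedBall
  set K : Set H := closure (⇑(T.toLinearMap) '' B) with hK
  have hKcpt : IsCompact K := hT'.isCompact_closure_image_of_bounded hBbdd
  have hKnorm : ∀ z ∈ K, 1 ≤ ‖z‖ := by
    intro z hz
    have hsub : ⇑(T.toLinearMap) '' B ⊆ {z : H | 1 ≤ ‖z‖} := by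
      rintro _ ⟨x, hx, rfl⟩
      exact hBTnorm x hx
    have hcl : IsClosed {z : H | 1 ≤ ‖z‖} := isClosed_le continuous_const continuous_norm
    exact closure_minimal hsub hcl hz
  -- the span of powers of T
  set 𝒮 : Submodule ℂ (H →L[ℂ] H) :=
    Submodule.span ℂ (Set.range fun n : ℕ => (T^n : H →L[ℂ] H)) with h𝒮
  have hcover : ∀ z ∈ K, ∃ S, S ∈ 𝒮 ∧ ‖S z - x₀‖ < 1 := by
    intro z hz
    have hz0 : z ≠ 0 := fun h => by
      have := hKnorm z hz; rw [h] at this; norm_num at this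
    have hx₀mem := hcyc z hz0 x₀
    rw [Metric.mem_closure_iff] at hx₀mem
    obtain ⟨b, hbmem, hbd⟩ := hx₀mem 1 one_pos
    -- rewrite the span of the orbit as the image of 𝒮 under evaluation at z
    set ev : (H →L[ℂ] H) →ₗ[ℂ] H :=
      { toFun := fun S => S z
        map_add' := fun f g => rfl
        map_smul' := fun c f => rfl } with hev
    have hspan : (Submodule.span ℂ (Set.range fun n : ℕ => (T^n) z)) = Submodule.map ev 𝒮 := by
      rw [h𝒮, Submodule.map_span]
      congr 1
      rw [← Set.range_comp]
      rfl
    rw [SetLike.mem_coe, hspan] at hbmem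
    obtain ⟨S, hS, hSb⟩ := hbmem
    refine ⟨S, hS, ?_⟩
    have : ev S = S z := rfl
    rw [this] at hSb
    rw [hSb, ← dist_eq_norm, dist_comm]
    exact hbd
  -- finite subcover
  set U : 𝒮 → Set H := fun S => {z : H | ‖(S : H →L[ℂ] H) z - x₀‖ < 1} with hU
  have hUopen : ∀ S : 𝒮, IsOpen (U S) :=
    fun S => isOpen_lt (((S : H →L[ℂ] H).continuous.sub continuous_const).norm)
      continuous_const
  have hKsub : K ⊆ ⋃ S : 𝒮, U S := by
    intro z hz
    obtain ⟨S, hS, hSz⟩ := hcover z hz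
    exact Set.mem_iUnion.mpr ⟨⟨S, hS⟩, hSz⟩
  obtain ⟨t, ht⟩ := hKcpt.elim_finite_subcover U hUopen hKsub
  set c : ℝ := 1 + ∑ S ∈ t, ‖(S : H →L[ℂ] H)‖ with hc
  have hsum_nonneg : 0 ≤ ∑ S ∈ t, ‖(S : H →L[ℂ] H)‖ :=
    Finset.sum_nonneg fun _ _ => norm_nonneg _
  have hc1 : 1 ≤ c := by rw [hc]; linarith
  have hc0 : 0 ≤ c := by linarith
  have hcS : ∀ S ∈ t, ‖((S : 𝒮) : H →L[ℂ] H)‖ ≤ c := by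
    intro S hS
    rw [hc]
    have := Finset.single_le_sum (f := fun S : 𝒮 => ‖(S : H →L[ℂ] H)‖)
      (fun _ _ => norm_nonneg _) hS
    linarith
  -- commutation
  have hcomm : ∀ S ∈ 𝒮, Commute T S := by
    intro S hS
    refine Submodule.span_induction ?_ ?_ ?_ ?_ hS
    · rintro _ ⟨n, rfl⟩
      exact (Commute.refl T).pow_right n
    · exact Commute.zero_right T
    · exact fun x y _ _ hx hy => hx.add_right hy
    · exact fun r x _ hx => hx.smul_right r
  -- the main induction
  have main : ∀ n : ℕ, ∃ Q : H →L[ℂ] H, Commute T Q ∧ ‖Q‖ ≤ c^n ∧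
      Q ((T^n) x₀) ∈ B := by
    intro n
    induction n with
    | zero =>
      refine ⟨1, Commute.one_right T, ?_, ?_⟩
      · rw [pow_zero]
        exact le_of_eq ContinuousLinearMap.norm_id
      · simp only [pow_zero, ContinuousLinearMap.one_apply]
        exact Metric.mem_closedBall_self zero_le_one
    | succ n ih =>
      obtain ⟨Q, hQcomm, hQnorm, hQB⟩ := ih
      set b : H := Q ((T^n) x₀) with hb
      have hTbK : T b ∈ K := subset_closure ⟨b, hQB, rfl⟩
      have := ht hTbK
      rw [Set.mem_iUnion₂] at this
      obtain ⟨S, hSt, hSU⟩ := this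
      rw [hU, Set.mem_setOf_eq] at hSU
      refine ⟨(S : H →L[ℂ] H) * Q, ?_, ?_, ?_⟩
      · exact (hcomm S S.2).mul_right hQcomm
      · calc ‖(S : H →L[ℂ] H) * Q‖ ≤ ‖(S : H →L[ℂ] H)‖ * ‖Q‖ := norm_mul_le _ _
          _ ≤ c * c^n := mul_le_mul (hcS S hSt) hQnorm (norm_nonneg _) hc0
          _ = c^(n+1) := (pow_succ' c n).symm
      · have happ : ((S : H →L[ℂ] H) * Q) ((T^(n+1)) x₀) = (S : H →L[ℂ] H) (T b) := by
          have h1 : (T^(n+1)) x₀ = T ((T^n) x₀) := by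
            rw [pow_succ']
            rfl
          rw [ContinuousLinearMap.mul_apply, h1, hb]
          congr 1
          have h2 : Q (T ((T^n) x₀)) = (Q * T) ((T^n) x₀) := rfl
          rw [h2, ← hQcomm.eq]
          rfl
        rw [happ]
        rw [hB, Metric.mem_closedBall, dist_eq_norm]
        exact le_of_lt hSU
  -- conclusion
  have hlower : ∀ n : ℕ, (1:ℝ) ≤ c^n * ‖(T : H →L[ℂ] H)^n‖ * ‖x₀‖ := by
    intro n
    obtain ⟨Q, _, hQnorm, hQB⟩ := main n
    calc (1:ℝ) ≤ ‖Q ((T^n) x₀)‖ := hBnorm _ hQB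
      _ ≤ ‖Q‖ * ‖(T^n) x₀‖ := Q.le_opNorm _
      _ ≤ ‖Q‖ * (‖(T : H →L[ℂ] H)^n‖ * ‖x₀‖) := by
          apply mul_le_mul_of_nonneg_left ((T^n).le_opNorm x₀) (norm_nonneg _)
      _ ≤ c^n * (‖(T : H →L[ℂ] H)^n‖ * ‖x₀‖) := by
          apply mul_le_mul_of_nonneg_right hQnorm (by positivity)
      _ = c^n * ‖(T : H →L[ℂ] H)^n‖ * ‖x₀‖ := by ring
  have htend := (aux_pow_norm_tendsto_zero hr hc0).mul_const ‖x₀‖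
  rw [zero_mul] at htend
  have hev := htend.eventually_lt_const (by norm_num : (0:ℝ) < 1)
  obtain ⟨n, hn⟩ := hev.exists
  exact absurd (hlower n) (not_le.mpr hn)


/-- Every compact operator on a complex Hilbert space of dimension greater than
one has a nontrivial closed invariant subspace (Lomonosov). -/
theorem compact_operator_invariant_subspace
    {H : Type*} [NormedAddCommGroup H] [InnerProductSpace ℂ H] [CompleteSpace H]
    (T : H →L[ℂ] H) (hT : IsCompactOperator T)
    (hdim : 1 < Module.rank ℂ H) :
    ∃ M : Submodule ℂ H, IsClosed (M : Set H) ∧ M ≠ ⊥ ∧ M ≠ ⊤ ∧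
      ∀ x ∈ M, T x ∈ M := by
  haveI : Nontrivial H := by
    rw [← rank_pos_iff_nontrivial (R := ℂ)]
    exact lt_trans zero_lt_one hdim
  by_cases hr : spectralRadius ℂ T = 0
  · -- quasinilpotent case, Hilden's argument
    by_cases hT0 : T = 0
    · exact aux_line T hdim 0 (fun x => by simp [hT0])
    by_contra hcon
    push_neg at hcon
    apply aux_hilden T hT hr hT0
    intro y hy z
    set S : Submodule ℂ H := Submodule.span ℂ (Set.range fun n : ℕ => (T^n) y) with hS
    set M : Submodule ℂ H := S.topologicalClosure with hM
    have hMcl : IsClosed (M : Set H) := S.isClosed_topologicalClosure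
    have hMcoe : (M : Set H) = closure (S : Set H) := Submodule.topologicalClosure_coe S
    have hSinv : ∀ w ∈ S, T w ∈ S := by
      intro w hw
      refine Submodule.span_induction ?_ ?_ ?_ ?_ hw
      · rintro _ ⟨n, rfl⟩
        apply Submodule.subset_span
        refine ⟨n+1, ?_⟩
        show (T^(n+1)) y = T ((T^n) y)
        rw [pow_succ']
        rfl
      · simp
      · intro p q _ _ hp hq
        rw [map_add]
        exact S.add_mem hp hq
      · intro r p _ hp
        rw [map_smul]
        exact S.smul_mem r hp
    have hMinv : ∀ x ∈ M, T x ∈ M := by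
      intro x hxM
      have hx' : x ∈ closure (S : Set H) := by rw [← hMcoe]; exact hxM
      have h1 : T x ∈ T '' closure (S : Set H) := ⟨x, hx', rfl⟩
      have h2 : T '' closure (S : Set H) ⊆ closure (T '' (S : Set H)) :=
        image_closure_subset_closure_image T.continuous
      have h3 : T '' (S : Set H) ⊆ (S : Set H) := by
        rintro _ ⟨w, hw, rfl⟩
        exact hSinv w hw
      have : T x ∈ closure (S : Set H) := closure_mono h3 (h2 h1)
      rw [← hMcoe] at this
      exact this
    have hMbot : M ≠ ⊥ := by
      intro h
      have hyS : y ∈ S := Submodule.subset_span ⟨0, by simp⟩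
      have hyM : y ∈ M := S.le_topologicalClosure hyS
      rw [h] at hyM
      exact hy (Submodule.mem_bot ℂ |>.mp hyM)
    have hMtop : M = ⊤ := by
      by_contra hne
      obtain ⟨x, hxM, hTx⟩ := hcon M hMcl hMbot hne
      exact hTx (hMinv x hxM)
    have : z ∈ M := hMtop ▸ Submodule.mem_top
    rw [← hMcoe]
    exact this
  · -- non-quasinilpotent case: eigenvector
    obtain ⟨c, v, hc0, hv0, hTv⟩ := aux_eigen T hT hr
    set M : Submodule ℂ H := LinearMap.ker ((T - c • (1 : H →L[ℂ] H) : H →L[ℂ] H) : H →ₗ[ℂ] H) with hM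
    have hmem : ∀ x : H, x ∈ M ↔ T x = c • x := by
      intro x
      rw [hM, LinearMap.mem_ker]
      constructor
      · intro h
        have : T x - c • x = 0 := by
          simpa [ContinuousLinearMap.sub_apply, ContinuousLinearMap.smul_apply,
            ContinuousLinearMap.one_apply] using h
        exact sub_eq_zero.mp this
      · intro h
        show (T - c • (1 : H →L[ℂ] H)) x = 0
        simp [ContinuousLinearMap.sub_apply, ContinuousLinearMap.smul_apply,
          ContinuousLinearMap.one_apply, h]
    by_cases htop : M = ⊤
    · exact aux_line T hdim c (fun x => (hmem x).mp (htop ▸ Submodule.mem_top))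
    refine ⟨M, ?_, ?_, htop, ?_⟩
    · exact ContinuousLinearMap.isClosed_ker _
    · intro h
      have hvM : v ∈ M := (hmem v).mpr hTv
      rw [h] at hvM
      exact hv0 (Submodule.mem_bot ℂ |>.mp hvM)
    · intro x hx
      rw [hmem] at hx ⊢
      rw [hx, map_smul, hx]
end
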